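/- Let t ≥ 1. The set of zero divisors of ℤ_{2^t}[i,j,k] is a two-sided ideal, and the quotient by this ideal is isomorphic to ℤ/2; in particular the number of units of ℤ_{2^t}[i,j,k] is 2^(4t-1). -/

import Mathlib

/-- For t ≥ 1, the set of zero divisors of ℤ_{2^t}[i,j,k] is a two-sided ideal with quotient
ℤ/2 (expressed as the kernel of a surjective ring homomorphism to ℤ/2), and the number of
units of ℤ_{2^t}[i,j,k] is 2^(4t-1). -/
theorem zero_divisors_ideal_quaternion (t : ℕ) (ht : 1 ≤ t) :
    (∃ f : Quaternion (ZMod (2 ^ t)) →+* ZMod 2,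
      Function.Surjective f ∧
      ∀ z : Quaternion (ZMod (2 ^ t)),
        f z = 0 ↔ (z = 0 ∨ ∃ w : Quaternion (ZMod (2 ^ t)), w ≠ 0 ∧ (z * w = 0 ∨ w * z = 0))) ∧
    Nat.card (Quaternion (ZMod (2 ^ t)))ˣ = 2 ^ (4 * t - 1) := by
  classical
  haveI : NeZero (2 ^ t) := ⟨pow_ne_zero _ two_ne_zero⟩
  haveI : Fact (1 < 2 ^ t) := ⟨by
    calc 1 < 2 := one_lt_two
    _ ≤ 2 ^ t := Nat.le_self_pow (by omega) 2⟩
  have hdvd : 2 ∣ 2 ^ t := dvd_pow_self 2 (by omega)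
  set g : ZMod (2 ^ t) →+* ZMod 2 := ZMod.castHom hdvd (ZMod 2) with hgdef
  have hg2 : g 2 = 0 := by
    have h1 : g 2 = (2 : ZMod 2) := map_ofNat g 2
    rw [h1]; decide
  set f : Quaternion (ZMod (2 ^ t)) →+* ZMod 2 :=
    { toFun := fun z => g (Quaternion.normSq z)
      map_one' := by simp
      map_mul' := fun z w => by simp [map_mul]
      map_zero' := by simp
      map_add' := fun z w => by
        show g (Quaternion.normSq (z + w)) = g (Quaternion.normSq z) + g (Quaternion.normSq w)
        rw [Quaternion.normSq_add, map_add, map_add, map_mul, hg2, zero_mul, add_zero] }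
    with hfdef
  have hf_apply : ∀ z, f z = g (Quaternion.normSq z) := fun z => rfl
  have hgval : ∀ a : ZMod (2 ^ t), g a = ((a.val : ℕ) : ZMod 2) := by
    intro a
    conv_lhs => rw [← ZMod.natCast_zmod_val a]
    rw [map_natCast]
  -- key unit lemma
  have keyUnit : ∀ z : Quaternion (ZMod (2 ^ t)), f z ≠ 0 → IsUnit z := by
    intro z hz
    have hn : IsUnit (Quaternion.normSq z) := by
      rw [hf_apply, hgval] at hz
      have hodd : ¬ 2 ∣ (Quaternion.normSq z).val := by
        intro h
        exact hz ((ZMod.natCast_eq_zero_iff _ 2).mpr h)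
      rw [← ZMod.natCast_zmod_val (Quaternion.normSq z)]
      refine (ZMod.isUnit_iff_coprime _ _).mpr (Nat.Coprime.pow_right _ ?_)
      exact Nat.coprime_comm.mp ((Nat.prime_two.coprime_iff_not_dvd).mpr hodd)
    obtain ⟨u, hu⟩ := hn
    set m : ZMod (2 ^ t) := ((u⁻¹ : (ZMod (2 ^ t))ˣ) : ZMod (2 ^ t)) with hm
    have hnm : Quaternion.normSq z * m = 1 := by
      rw [← hu, hm]; exact u.mul_inv
    refine ⟨⟨z, star z * (m : Quaternion (ZMod (2 ^ t))), ?_, ?_⟩, rfl⟩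
    · rw [← mul_assoc, Quaternion.self_mul_star, ← Quaternion.coe_mul, hnm,
        Quaternion.coe_one]
    · rw [mul_assoc, Quaternion.coe_commutes, ← mul_assoc, Quaternion.star_mul_self,
        ← Quaternion.coe_mul, hnm, Quaternion.coe_one]
  -- kernel characterization
  have hker : ∀ z : Quaternion (ZMod (2 ^ t)),
      f z = 0 ↔ (z = 0 ∨ ∃ w : Quaternion (ZMod (2 ^ t)), w ≠ 0 ∧ (z * w = 0 ∨ w * z = 0)) := by
    intro z
    constructor
    · intro hz
      by_cases h0 : z = 0
      · exact Or.inl h0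
      refine Or.inr ?_
      have hclt : 2 ^ (t - 1) < 2 ^ t := Nat.pow_lt_pow_right one_lt_two (by omega)
      have hcne : ((2 ^ (t - 1) : ℕ) : ZMod (2 ^ t)) ≠ 0 := by
        rw [Ne, ZMod.natCast_eq_zero_iff]
        intro h
        have := Nat.le_of_dvd (by positivity) h
        omega
      set c : ZMod (2 ^ t) := ((2 ^ (t - 1) : ℕ) : ZMod (2 ^ t)) with hc
      have hcn : c * Quaternion.normSq z = 0 := by
        have h2 : 2 ∣ (Quaternion.normSq z).val := by
          rw [hf_apply, hgval] at hz
          exact (ZMod.natCast_eq_zero_iff _ 2).mp hz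
        calc c * Quaternion.normSq z
            = ((2 ^ (t - 1) * (Quaternion.normSq z).val : ℕ) : ZMod (2 ^ t)) := by
              rw [Nat.cast_mul, ← hc, ZMod.natCast_zmod_val]
          _ = 0 := by
              rw [ZMod.natCast_eq_zero_iff]
              obtain ⟨k, hk⟩ := h2
              refine ⟨k, ?_⟩
              rw [hk, ← mul_assoc, ← pow_succ]
              congr 2
              omega
      by_cases hw : ((c : Quaternion (ZMod (2 ^ t))) * star z) = 0
      · refine ⟨(c : Quaternion (ZMod (2 ^ t))), ?_, Or.inl ?_⟩
        · intro h
          exact hcne (Quaternion.coe_injective (h.trans Quaternion.coe_zero.symm))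
        · have h1 : (c : Quaternion (ZMod (2 ^ t))) * z = 0 := by
            have h2 := congrArg star hw
            rwa [star_mul, Quaternion.star_coe, star_star, star_zero,
              ← Quaternion.coe_commutes] at h2
          rw [← Quaternion.coe_commutes]
          exact h1
      · refine ⟨(c : Quaternion (ZMod (2 ^ t))) * star z, hw, Or.inl ?_⟩
        calc z * ((c : Quaternion (ZMod (2 ^ t))) * star z)
            = (c : Quaternion (ZMod (2 ^ t))) * (z * star z) := by
              rw [← mul_assoc, ← Quaternion.coe_commutes, mul_assoc]
          _ = ((c * Quaternion.normSq z : ZMod (2 ^ t)) : Quaternion (ZMod (2 ^ t))) := by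
              rw [Quaternion.self_mul_star, Quaternion.coe_mul]
          _ = 0 := by rw [hcn, Quaternion.coe_zero]
    · rintro (rfl | ⟨w, hw, h | h⟩)
      · exact map_zero f
      · by_contra hz
        exact hw (((keyUnit z hz).mul_right_eq_zero).mp h)
      · by_contra hz
        exact hw (((keyUnit z hz).mul_left_eq_zero).mp h)
  -- surjectivity
  have hsurj : Function.Surjective f := by
    have h01 : ∀ a : ZMod 2, a = 0 ∨ a = 1 := by decide
    intro a
    rcases h01 a with rfl | rfl
    exacts [⟨0, map_zero f⟩, ⟨1, map_one f⟩]
  refine ⟨⟨f, hsurj, hker⟩, ?_⟩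
  -- counting
  haveI instF : Fintype (Quaternion (ZMod (2 ^ t))) :=
    Fintype.ofEquiv _ (Quaternion.equivTuple (ZMod (2 ^ t))).symm
  have hcard : Fintype.card (Quaternion (ZMod (2 ^ t))) = 2 ^ (4 * t) := by
    refine (Fintype.card_congr (Quaternion.equivTuple (ZMod (2 ^ t)))).trans ?_
    simp [ZMod.card, ← pow_mul, mul_comm]
  have hunit_iff : ∀ z : Quaternion (ZMod (2 ^ t)), IsUnit z ↔ f z = 1 := by
    intro z
    have h01 : ∀ a : ZMod 2, a = 0 ∨ a = 1 := by decide
    constructor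
    · intro hz
      rcases h01 (f z) with h | h
      · exfalso
        rcases (hker z).mp h with rfl | ⟨w, hw, h1 | h1⟩
        · exact not_isUnit_zero hz
        · exact hw ((hz.mul_right_eq_zero).mp h1)
        · exact hw ((hz.mul_left_eq_zero).mp h1)
      · exact h
    · intro h
      exact keyUnit z (by rw [h]; exact one_ne_zero)
  let e0 : (Quaternion (ZMod (2 ^ t)))ˣ ≃ {z : Quaternion (ZMod (2 ^ t)) // IsUnit z} :=
    { toFun := fun u => ⟨u, u.isUnit⟩
      invFun := fun x => x.2.unit
      left_inv := fun u => Units.ext rfl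
      right_inv := fun x => Subtype.ext x.2.unit_spec }
  let e1 : (Quaternion (ZMod (2 ^ t)))ˣ ≃ {z : Quaternion (ZMod (2 ^ t)) // f z = 1} :=
    e0.trans (Equiv.subtypeEquivRight hunit_iff)
  let e2 : {z : Quaternion (ZMod (2 ^ t)) // f z = 0} ≃ {z : Quaternion (ZMod (2 ^ t)) // f z = 1} :=
    (Equiv.addRight (1 : Quaternion (ZMod (2 ^ t)))).subtypeEquiv (fun z => by
      simp only [Equiv.coe_addRight, map_add, map_one]
      exact add_eq_right.symm)
  have hcompl : ∀ z : Quaternion (ZMod (2 ^ t)), f z = 0 ↔ ¬ f z = 1 := by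
    intro z
    have h01 : ∀ a : ZMod 2, a = 0 ↔ ¬ a = 1 := by decide
    exact h01 _
  have h0 : Fintype.card {z : Quaternion (ZMod (2 ^ t)) // f z = 0}
      = Fintype.card {z : Quaternion (ZMod (2 ^ t)) // f z = 1} := Fintype.card_congr e2
  have h1 : Fintype.card {z : Quaternion (ZMod (2 ^ t)) // f z = 0}
      = Fintype.card {z : Quaternion (ZMod (2 ^ t)) // ¬ f z = 1} :=
    Fintype.card_congr (Equiv.subtypeEquivRight hcompl)
  have h2 : Fintype.card {z : Quaternion (ZMod (2 ^ t)) // ¬ f z = 1}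
      = Fintype.card (Quaternion (ZMod (2 ^ t)))
        - Fintype.card {z : Quaternion (ZMod (2 ^ t)) // f z = 1} :=
    Fintype.card_subtype_compl _
  have hle : Fintype.card {z : Quaternion (ZMod (2 ^ t)) // f z = 1}
      ≤ Fintype.card (Quaternion (ZMod (2 ^ t))) := Fintype.card_subtype_le _
  have hNcard : Nat.card (Quaternion (ZMod (2 ^ t)))ˣ
      = Fintype.card {z : Quaternion (ZMod (2 ^ t)) // f z = 1} := by
    rw [Nat.card_congr e1, Nat.card_eq_fintype_card]
  rw [hNcard]
  have hpow : 2 ^ (4 * t) = 2 * 2 ^ (4 * t - 1) := by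
    rw [← pow_succ']
    congr 1
    omega
  rw [hcard] at h2 hle
  omega
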